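/- arXiv:1309.2890 — 7 statements merged into one kernel-verified Lean document; each statement's English description precedes it below -/
import Mathlib

section
/- Let G be a locally compact group, H < G a closed subgroup, and suppose H is the limit in the Chabauty topology of a net {H_i} of closed subgroups of G, each of which is relatively amenable in G. Then H is relatively amenable in G. -/
open scoped Topology

/-- A continuous affine action of a topological group `G` on a topological `ℝ`-vector space. -/
structure AffineActionOn (G : Type*) [Group G] [TopologicalSpace G]
    (E : Type) [AddCommGroup E] [Module ℝ E] [TopologicalSpace E] where
  act : G → E → E
  one_act : ∀ x, act 1 x = x
  mul_act : ∀ g h x, act (g * h) x = act g (act h x)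
  continuous : Continuous fun p : G × E => act p.1 p.2
  affine : ∀ g (x y : E) (t : ℝ), 0 ≤ t → t ≤ 1 →
    act g (t • x + (1 - t) • y) = t • act g x + (1 - t) • act g y

/-- A nonempty convex compact `G`-space: a nonempty convex compact subset of a Hausdorff
locally convex topological `ℝ`-vector space with a continuous affine `G`-action preserving it. -/
structure ConvexCompactSpaceOf (G : Type*) [Group G] [TopologicalSpace G] where
  E : Type
  [addCommGroup : AddCommGroup E]
  [module : Module ℝ E]
  [topology : TopologicalSpace E]
  [addGroupTop : IsTopologicalAddGroup E]
  [smulCont : ContinuousSMul ℝ E]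
  [locConvex : LocallyConvexSpace ℝ E]
  [t2 : T2Space E]
  ρ : AffineActionOn G E
  K : Set E
  compact : IsCompact K
  convex : Convex ℝ K
  nonempty : K.Nonempty
  invariant : ∀ g, ∀ x ∈ K, ρ.act g x ∈ K

attribute [instance] ConvexCompactSpaceOf.addCommGroup ConvexCompactSpaceOf.module
  ConvexCompactSpaceOf.topology ConvexCompactSpaceOf.addGroupTop ConvexCompactSpaceOf.smulCont
  ConvexCompactSpaceOf.locConvex ConvexCompactSpaceOf.t2

/-- `H < G` is relatively amenable: `H` fixes a point in every nonempty convex compact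
`G`-space. -/
def RelativelyAmenable (G : Type*) [Group G] [TopologicalSpace G] (H : Subgroup G) : Prop :=
  ∀ S : ConvexCompactSpaceOf G, ∃ x ∈ S.K, ∀ h ∈ H, S.ρ.act h x = x

/-- A topological group `L` is amenable: it fixes a point in every nonempty convex compact
`L`-space. -/
def TopAmenable (L : Type*) [Group L] [TopologicalSpace L] : Prop :=
  ∀ S : ConvexCompactSpaceOf L, ∃ x ∈ S.K, ∀ g : L, S.ρ.act g x = x

/-- `G` belongs to the class `𝒳`: every relatively amenable closed subgroup is amenable. -/
def MemClassX (G : Type*) [Group G] [TopologicalSpace G] : Prop :=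
  ∀ H : Subgroup G, IsClosed (H : Set G) → RelativelyAmenable G H → TopAmenable H


/-- If a closed subgroup `H` of a locally compact group `G` is the Chabauty limit of a net
`{H i}` of closed subgroups each relatively amenable in `G`, then `H` is relatively amenable
in `G`.  Chabauty convergence is expressed by the two conditions `happrox` (every point of `H`
is a limit of points of the `H i`) and `hcluster` (every cluster point of a net of points of
the `H i` lies in `H`). -/
theorem relativelyAmenable_of_chabauty_limit
    {G : Type} [Group G] [TopologicalSpace G] [IsTopologicalGroup G] [LocallyCompactSpace G]
    (H : Subgroup G) (hHclosed : IsClosed (H : Set G))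
    {ι : Type} (l : Filter ι) [l.NeBot] (Hi : ι → Subgroup G)
    (hclosed : ∀ i, IsClosed (Hi i : Set G))
    (hra : ∀ i, RelativelyAmenable G (Hi i))
    (happrox : ∀ x ∈ H, ∃ u : ι → G, (∀ i, u i ∈ Hi i) ∧ Filter.Tendsto u l (nhds x))
    (hcluster : ∀ u : ι → G, (∀ i, u i ∈ Hi i) → ∀ x : G, MapClusterPt x l u → x ∈ H) :
    RelativelyAmenable G H := by
  intro S
  choose xf hxK hxfix using fun i => hra i S
  have hmem : ∀ᶠ i in l, xf i ∈ S.K := Filter.Eventually.of_forall hxK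
  obtain ⟨x, hxK', hx⟩ := S.compact.exists_mapClusterPt (u := xf)
    (Filter.le_principal_iff.mpr hmem)
  refine ⟨x, hxK', fun h hh => ?_⟩
  obtain ⟨u, hu, hul⟩ := happrox h hh
  obtain ⟨U, hUl, hUx⟩ := mapClusterPt_iff_ultrafilter.mp hx
  have hUh : Filter.Tendsto u U (𝓝 h) := hul.mono_left hUl
  have hpair : Filter.Tendsto (fun i => (u i, xf i)) U (𝓝 (h, x)) := hUh.prodMk_nhds hUx
  have hact : Filter.Tendsto (fun i => S.ρ.act (u i) (xf i)) U (𝓝 (S.ρ.act h x)) :=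
    (S.ρ.continuous.tendsto (h, x)).comp hpair
  have heq : (fun i => S.ρ.act (u i) (xf i)) = xf := by
    funext i; exact hxfix i (u i) (hu i)
  rw [heq] at hact
  exact tendsto_nhds_unique hact hUx
end

section
/- Let G be a discrete group and H < G a subgroup. If H is relatively amenable in G, then H is amenable. Equivalently, every discrete group belongs to the class X of groups in which relative amenability is equivalent to amenability for all closed subgroups. -/
open scoped Topology

/-- Every discrete group belongs to the class `𝒳`: if a subgroup `H` of a discrete group `G`
is relatively amenable in `G`, then `H` is amenable. -/
theorem discrete_memClassX
    {G : Type} [Group G] [TopologicalSpace G] [DiscreteTopology G]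
    (H : Subgroup G) (hra : RelativelyAmenable G H) : TopAmenable H := by
  classical
  intro S
  -- continuity of each slice of the H-action
  have hact_cont : ∀ h : H, Continuous (S.ρ.act h) := fun h =>
    S.ρ.continuous.comp (continuous_const.prodMk continuous_id)
  -- the induced set of H-equivariant maps into K
  let K' : Set (G → S.E) :=
    {f | (∀ x, f x ∈ S.K) ∧ ∀ (h : H) (x : G), f (↑h * x) = S.ρ.act h (f x)}
  -- closedness of K'
  have h1 : IsClosed {f : G → S.E | ∀ x, f x ∈ S.K} := by
    have : {f : G → S.E | ∀ x, f x ∈ S.K} = ⋂ x : G, (fun f : G → S.E => f x) ⁻¹' S.K := by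
      ext f; simp
    rw [this]
    exact isClosed_iInter fun x => S.compact.isClosed.preimage (continuous_apply x)
  have h2 : IsClosed {f : G → S.E | ∀ (h : H) (x : G), f (↑h * x) = S.ρ.act h (f x)} := by
    have : {f : G → S.E | ∀ (h : H) (x : G), f (↑h * x) = S.ρ.act h (f x)} =
        ⋂ (h : H) (x : G), {f : G → S.E | f (↑h * x) = S.ρ.act h (f x)} := by
      ext f; simp
    rw [this]
    exact isClosed_iInter fun h => isClosed_iInter fun x =>
      isClosed_eq (continuous_apply _) ((hact_cont h).comp (continuous_apply x))
  have hclosed : IsClosed K' := h1.inter h2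
  -- compactness
  have hcompact : IsCompact K' := by
    refine (isCompact_univ_pi fun _ : G => S.compact).of_isClosed_subset hclosed ?_
    intro f hf
    simpa [Set.mem_univ_pi] using hf.1
  -- convexity
  have hconvex : Convex ℝ K' := by
    intro f hf f' hf' a b ha hb hab
    have hb' : b = 1 - a := by linarith
    constructor
    · intro x
      exact S.convex (hf.1 x) (hf'.1 x) ha hb hab
    · intro h x
      have ha1 : a ≤ 1 := by linarith
      have := S.ρ.affine h (f x) (f' x) a ha ha1
      simp only [Pi.add_apply, Pi.smul_apply, hb', hf.2 h x, hf'.2 h x, this]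
  -- nonemptiness : use coset representatives
  obtain ⟨x₀, hx₀⟩ := S.nonempty
  have key : ∀ x : G, x * (Quotient.mk (QuotientGroup.rightRel H) x).out⁻¹ ∈ H := by
    intro x
    have h1 : (Quotient.mk (QuotientGroup.rightRel H)
        (Quotient.mk (QuotientGroup.rightRel H) x).out) =
        Quotient.mk (QuotientGroup.rightRel H) x := Quotient.out_eq _
    have h2 := Quotient.exact h1
    exact (QuotientGroup.rightRel_apply).mp h2
  have keyrep : ∀ (h : H) (x : G),
      (Quotient.mk (QuotientGroup.rightRel H) (↑h * x)).out =
      (Quotient.mk (QuotientGroup.rightRel H) x).out := by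
    intro h x
    have : Quotient.mk (QuotientGroup.rightRel H) (↑h * x) =
        Quotient.mk (QuotientGroup.rightRel H) x := by
      apply Quotient.sound
      have hx : x * (↑h * x)⁻¹ = (↑h)⁻¹ := by group
      exact (QuotientGroup.rightRel_apply).mpr (by rw [hx]; exact H.inv_mem h.2)
    rw [this]
  let f₀ : G → S.E := fun x =>
    S.ρ.act ⟨x * (Quotient.mk (QuotientGroup.rightRel H) x).out⁻¹, key x⟩ x₀
  have hf₀ : f₀ ∈ K' := by
    constructor
    · intro x; exact S.invariant _ _ hx₀
    · intro h x
      show S.ρ.act ⟨↑h * x * (Quotient.mk (QuotientGroup.rightRel H) (↑h * x)).out⁻¹, _⟩ x₀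
          = S.ρ.act h (S.ρ.act ⟨x * (Quotient.mk (QuotientGroup.rightRel H) x).out⁻¹, _⟩ x₀)
      rw [← S.ρ.mul_act]
      congr 1
      apply Subtype.ext
      show ↑h * x * (Quotient.mk (QuotientGroup.rightRel H) (↑h * x)).out⁻¹ =
        ↑h * (x * (Quotient.mk (QuotientGroup.rightRel H) x).out⁻¹)
      rw [keyrep h x, mul_assoc]
  -- joint continuity of the translation action (G discrete)
  have hcont : Continuous fun p : G × (G → S.E) => (fun x => p.2 (x * p.1)) := by
    rw [continuous_iff_continuousAt]
    rintro ⟨g, f⟩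
    unfold ContinuousAt
    rw [nhds_prod_eq, nhds_discrete, Filter.pure_prod, Filter.tendsto_map'_iff]
    exact (continuous_pi fun x => continuous_apply (x * g)).tendsto f
  -- the induced G-space
  let S' : ConvexCompactSpaceOf G :=
    { E := G → S.E
      ρ := { act := fun g f x => f (x * g)
             one_act := fun f => by funext x; show f (x * 1) = f x; rw [mul_one]
             mul_act := fun g h f => by funext x; simp [mul_assoc]
             continuous := hcont
             affine := fun g f f' t _ _ => rfl }
      K := K'
      compact := hcompact
      convex := hconvex
      nonempty := ⟨f₀, hf₀⟩
      invariant := by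
        intro g f hf
        refine ⟨fun x => hf.1 (x * g), fun h x => ?_⟩
        show f (↑h * x * g) = S.ρ.act h (f (x * g))
        rw [mul_assoc]
        exact hf.2 h (x * g) }
  obtain ⟨f, hfK, hffix⟩ := hra S'
  refine ⟨f 1, hfK.1 1, fun h => ?_⟩
  have e1 : f (1 * (h : G)) = f 1 := congrFun (hffix (h : G) h.2) 1
  have e2 : f (↑h * 1) = S.ρ.act h (f 1) := hfK.2 h 1
  rw [← e2]
  rw [mul_one] at e2 ⊢
  rw [one_mul] at e1
  rw [e1]
end

section
/- Let G be a locally compact group in the class X and H < G a closed subgroup. Then H belongs to X. That is, the class X is closed under taking closed subgroups. -/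
open scoped Topology

/-- Restrict a convex compact `G`-space along a continuous group homomorphism. -/
def ConvexCompactSpaceOf.comap {G : Type*} [Group G] [TopologicalSpace G]
    {L : Type*} [Group L] [TopologicalSpace L]
    (S : ConvexCompactSpaceOf G) (f : L →* G) (hf : Continuous f) :
    ConvexCompactSpaceOf L where
  E := S.E
  ρ := { act := fun l x => S.ρ.act (f l) x
         one_act := fun x => by simp [S.ρ.one_act]
         mul_act := fun g h x => by simp [S.ρ.mul_act]
         continuous := S.ρ.continuous.comp (hf.prodMap continuous_id)
         affine := fun g x y t ht ht1 => S.ρ.affine _ x y t ht ht1 }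
  K := S.K
  compact := S.compact
  convex := S.convex
  nonempty := S.nonempty
  invariant := fun g x hx => S.invariant (f g) x hx

/-- The class `𝒳` is closed under taking closed subgroups. -/
theorem memClassX_closed_subgroup
    {G : Type} [Group G] [TopologicalSpace G] [IsTopologicalGroup G] [LocallyCompactSpace G]
    (hG : MemClassX G) (H : Subgroup G) (hH : IsClosed (H : Set G)) : MemClassX H := by
  intro K hK hKrel
  set K' : Subgroup G := K.map H.subtype with hK'def
  have hcoe : (K' : Set G) = Subtype.val '' (K : Set ↥H) := by
    ext g
    simp [hK'def, Subgroup.mem_map, eq_comm]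
  have hK'closed : IsClosed (K' : Set G) := by
    rw [hcoe]
    exact hH.isClosedEmbedding_subtypeVal.isClosedMap _ hK
  have memH : ∀ g : ↥K', (g : G) ∈ H := by
    rintro ⟨g, hg⟩
    obtain ⟨h, hh, rfl⟩ := hg
    exact h.2
  have memK : ∀ g : ↥K', (⟨(g : G), memH g⟩ : ↥H) ∈ K := by
    rintro ⟨g, hg⟩
    obtain ⟨h, hh, rfl⟩ := hg
    simpa using hh
  have hrel : RelativelyAmenable G K' := by
    intro S
    obtain ⟨x, hx, hfix⟩ := hKrel (S.comap H.subtype continuous_subtype_val)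
    refine ⟨x, hx, ?_⟩
    rintro g hg
    obtain ⟨h, hh, rfl⟩ := hg
    exact hfix h hh
  have hA : TopAmenable ↥K' := hG K' hK'closed hrel
  intro S
  let f : ↥K' →* ↥K :=
    { toFun := fun g => ⟨⟨(g : G), memH g⟩, memK g⟩
      map_one' := by ext; rfl
      map_mul' := fun a b => by ext; rfl }
  have hfcont : Continuous f :=
    ((continuous_subtype_val).subtype_mk _).subtype_mk _
  obtain ⟨x, hx, hfix⟩ := hA (S.comap f hfcont)
  refine ⟨x, hx, ?_⟩
  intro k
  have hkmem : ((k : ↥H) : G) ∈ K' := ⟨(k : ↥H), k.2, rfl⟩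
  have h1 : f ⟨((k : ↥H) : G), hkmem⟩ = k := by ext; rfl
  have := hfix ⟨((k : ↥H) : G), hkmem⟩
  simpa [ConvexCompactSpaceOf.comap, h1] using this
end

section
/- Let G be a locally compact group which is the union of a directed family {G_i} of open subgroups, each belonging to the class X. Then G belongs to X. -/
open scoped Topology

/- pullback -/
def ConvexCompactSpaceOf.pullback {M N : Type*} [Group M] [TopologicalSpace M]
    [Group N] [TopologicalSpace N] (S : ConvexCompactSpaceOf N) (φ : M →* N)
    (hφ : Continuous φ) : ConvexCompactSpaceOf M where
  E := S.E
  ρ := { act := fun m x => S.ρ.act (φ m) x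
         one_act := fun x => by simp [S.ρ.one_act]
         mul_act := fun g h x => by simp [S.ρ.mul_act]
         continuous := S.ρ.continuous.comp ((hφ.comp continuous_fst).prodMk continuous_snd)
         affine := fun g x y t ht ht1 => S.ρ.affine _ x y t ht ht1 }
  K := S.K
  compact := S.compact
  convex := S.convex
  nonempty := S.nonempty
  invariant := fun g x hx => S.invariant _ x hx

section Induce

variable {G : Type} [Group G] [TopologicalSpace G] [IsTopologicalGroup G]

open Topology

/-- cocycle -/
noncomputable def cc (N : Subgroup G) (g : G) (q : G ⧸ N) : G := (q.out)⁻¹ * g * ((g⁻¹ • q).out)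

lemma smul_eq_mk_mul (N : Subgroup G) (g : G) (q : G ⧸ N) :
    g • q = QuotientGroup.mk (g * q.out) := by
  conv_lhs => rw [← QuotientGroup.out_eq' q]
  rw [MulAction.Quotient.smul_mk, smul_eq_mul]

lemma cc_mem (N : Subgroup G) (g : G) (q : G ⧸ N) : cc N g q ∈ N := by
  have h1 : QuotientGroup.mk (g⁻¹ * q.out) = (QuotientGroup.mk ((g⁻¹ • q).out) : G ⧸ N) := by
    rw [QuotientGroup.out_eq', smul_eq_mk_mul]
  have h2 := QuotientGroup.eq.mp h1
  have h3 : (g⁻¹ * q.out)⁻¹ * (g⁻¹ • q).out = cc N g q := by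
    unfold cc; group
  rwa [h3] at h2

variable (N : Subgroup G) (T : ConvexCompactSpaceOf ↥N)

open Classical in
noncomputable def tau (g : G) (x : T.E) : T.E :=
  if h : g ∈ N then T.ρ.act ⟨g, h⟩ x else x

lemma tau_mem {g : G} (h : g ∈ N) (x : T.E) : tau N T g x = T.ρ.act ⟨g, h⟩ x := by
  simp [tau, h]

lemma rho_congr {a b : ↥N} (h : (a : G) = b) {x y : T.E} (hxy : x = y) :
    T.ρ.act a x = T.ρ.act b y := by rw [Subtype.ext h, hxy]

lemma tau_continuousAt (hN : IsOpen (N : Set G)) {g : G} (hg : g ∈ N) (x : T.E) :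
    ContinuousAt (fun p : G × T.E => tau N T p.1 p.2) (g, x) := by
  have he : IsOpenEmbedding (fun p : ↥N × T.E => ((p.1 : G), p.2)) :=
    (hN.isOpenEmbedding_subtypeVal).prodMap IsOpenEmbedding.id
  have hco : Continuous ((fun p : G × T.E => tau N T p.1 p.2) ∘
      (fun p : ↥N × T.E => ((p.1 : G), p.2))) := by
    have heq : ((fun p : G × T.E => tau N T p.1 p.2) ∘ fun p : ↥N × T.E => ((p.1 : G), p.2))
        = fun p : ↥N × T.E => T.ρ.act p.1 p.2 := by
      funext p
      simp [tau, p.1.2]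
    rw [heq]; exact T.ρ.continuous
  exact he.continuousAt_iff.mp (hco.continuousAt (x := (⟨g, hg⟩, x)))

noncomputable def inducedSpace (hN : IsOpen (N : Set G)) : ConvexCompactSpaceOf G where
  E := (G ⧸ N) → T.E
  ρ := {
    act := fun g F q => tau N T (cc N g q) (F (g⁻¹ • q))
    one_act := fun F => by
      funext q
      show tau N T (cc N 1 q) (F ((1:G)⁻¹ • q)) = F q
      have hq : (1 : G)⁻¹ • q = q := by rw [inv_one, one_smul]
      rw [tau_mem N T (cc_mem N 1 q)]
      have h1 : (⟨cc N 1 q, cc_mem N 1 q⟩ : ↥N) = 1 := Subtype.ext (by simp [cc, hq])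
      rw [h1, T.ρ.one_act, hq]
    mul_act := fun g h F => by
      funext q
      show tau N T (cc N (g*h) q) (F ((g*h)⁻¹ • q))
        = tau N T (cc N g q) (tau N T (cc N h (g⁻¹ • q)) (F (h⁻¹ • (g⁻¹ • q))))
      have hsm : (g * h)⁻¹ • q = h⁻¹ • (g⁻¹ • q) := by rw [mul_inv_rev, mul_smul]
      rw [tau_mem N T (cc_mem N (g*h) q), tau_mem N T (cc_mem N g q),
          tau_mem N T (cc_mem N h (g⁻¹ • q)), ← T.ρ.mul_act]
      refine rho_congr N T ?_ (by rw [hsm])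
      simp only [Subgroup.coe_mul]
      simp only [cc, hsm]; group
    continuous := by
      apply continuous_pi
      intro q
      rw [continuous_iff_continuousAt]
      rintro ⟨g0, F0⟩
      set U : Set G := (fun g : G => q.out⁻¹ * g * (g0⁻¹ • q).out) ⁻¹' (N : Set G) with hU
      have hUopen : IsOpen U :=
        (hN.preimage ((continuous_const.mul continuous_id).mul continuous_const))
      have hg0U : g0 ∈ U := cc_mem N g0 q
      have hUsm : ∀ g ∈ U, g⁻¹ • q = g0⁻¹ • q := by
        intro g hg
        rw [smul_eq_mk_mul, ← QuotientGroup.out_eq' (g0⁻¹ • q)]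
        apply QuotientGroup.eq.mpr
        have : (g⁻¹ * q.out)⁻¹ * (g0⁻¹ • q).out = q.out⁻¹ * g * (g0⁻¹ • q).out := by group
        rw [this]; exact hg
      have hψc : ContinuousAt ((fun pr : G × T.E => tau N T pr.1 pr.2) ∘
          (fun p : G × ((G ⧸ N) → T.E) =>
            ((q.out⁻¹ * p.1 * (g0⁻¹ • q).out : G), p.2 (g0⁻¹ • q)))) (g0, F0) := by
        have hinner : Continuous (fun p : G × ((G ⧸ N) → T.E) =>
            ((q.out⁻¹ * p.1 * (g0⁻¹ • q).out : G), p.2 (g0⁻¹ • q))) :=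
          ((continuous_const.mul continuous_fst).mul continuous_const).prodMk
            ((continuous_apply _).comp continuous_snd)
        have houter : ContinuousAt (fun pr : G × T.E => tau N T pr.1 pr.2)
            ((q.out⁻¹ * g0 * (g0⁻¹ • q).out : G), F0 (g0⁻¹ • q)) :=
          tau_continuousAt N T hN
            (show q.out⁻¹ * g0 * (g0⁻¹ • q).out ∈ N from cc_mem N g0 q) (F0 (g0⁻¹ • q))
        exact ContinuousAt.comp (x := (g0, F0)) houter hinner.continuousAt
      apply hψc.congr
      have hmem : U ×ˢ (Set.univ : Set ((G ⧸ N) → T.E)) ∈ 𝓝 (g0, F0) :=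
        (hUopen.prod isOpen_univ).mem_nhds ⟨hg0U, trivial⟩
      filter_upwards [hmem] with p hp
      obtain ⟨hp1, -⟩ := hp
      show tau N T (q.out⁻¹ * p.1 * (g0⁻¹ • q).out) (p.2 (g0⁻¹ • q))
        = tau N T (cc N p.1 q) (p.2 (p.1⁻¹ • q))
      simp only [cc, hUsm p.1 hp1]
    affine := fun g F F' t ht ht1 => by
      funext q
      simp only [Pi.add_apply, Pi.smul_apply]
      rw [tau_mem N T (cc_mem N g q), tau_mem N T (cc_mem N g q), tau_mem N T (cc_mem N g q)]
      exact T.ρ.affine _ _ _ t ht ht1 }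
  K := Set.pi Set.univ (fun _ => T.K)
  compact := isCompact_univ_pi fun _ => T.compact
  convex := convex_pi fun _ _ => T.convex
  nonempty := T.nonempty.elim fun x hx => ⟨fun _ => x, fun _ _ => hx⟩
  invariant := fun g F hF q _ => by
    show tau N T (cc N g q) (F (g⁻¹ • q)) ∈ T.K
    rw [tau_mem N T (cc_mem N g q)]
    exact T.invariant _ _ (hF _ (Set.mem_univ _))



lemma relAmen_subgroupOf (N : Subgroup G) (hN : IsOpen (N : Set G)) (H : Subgroup G)
    (hrel : RelativelyAmenable G H) : RelativelyAmenable ↥N (H.subgroupOf N) := by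
  intro T
  obtain ⟨F0, hF0K, hfix⟩ := hrel (inducedSpace N T hN)
  set q1 : G ⧸ N := QuotientGroup.mk 1 with hq1
  have pa : q1.out ∈ N := by
    have h1 : (QuotientGroup.mk q1.out : G ⧸ N) = QuotientGroup.mk 1 := QuotientGroup.out_eq' q1
    have h2 := QuotientGroup.eq.mp h1
    simpa using (N.inv_mem h2)
  set c : ↥N := ⟨q1.out, pa⟩ with hc
  refine ⟨T.ρ.act c (F0 q1), T.invariant _ _ (hF0K q1 (Set.mem_univ _)), ?_⟩
  intro k hk
  have hkH : ((k : ↥N) : G) ∈ H := hk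
  have hkN : ((k : ↥N) : G) ∈ N := (k : ↥N).2
  set kg : G := ((k : ↥N) : G) with hkg
  have hmem : q1.out⁻¹ * kg * q1.out ∈ N :=
    N.mul_mem (N.mul_mem (N.inv_mem pa) hkN) pa
  have hfixk := congrFun (hfix kg hkH) q1
  have hq : kg⁻¹ • q1 = q1 := by
    conv_rhs => rw [← QuotientGroup.out_eq' q1]
    rw [smul_eq_mk_mul]
    apply QuotientGroup.eq.mpr
    have hgp : (kg⁻¹ * q1.out)⁻¹ * q1.out = q1.out⁻¹ * kg * q1.out := by group
    rw [hgp]; exact hmem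
  show T.ρ.act (k : ↥N) (T.ρ.act c (F0 q1)) = T.ρ.act c (F0 q1)
  have hfixk' : tau N T (cc N kg q1) (F0 (kg⁻¹ • q1)) = F0 q1 := hfixk
  rw [hq] at hfixk'
  have hccval : cc N kg q1 = q1.out⁻¹ * kg * q1.out := by
    simp only [cc, hq]
  rw [hccval, tau_mem N T hmem] at hfixk'
  have hsub : (⟨q1.out⁻¹ * kg * q1.out, hmem⟩ : ↥N) = c⁻¹ * (k : ↥N) * c := by
    ext; simp [hc, hkg]
  rw [hsub] at hfixk'
  calc T.ρ.act (k : ↥N) (T.ρ.act c (F0 q1))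
      = T.ρ.act ((k : ↥N) * c) (F0 q1) := (T.ρ.mul_act _ _ _).symm
    _ = T.ρ.act (c * (c⁻¹ * (k : ↥N) * c)) (F0 q1) := by group
    _ = T.ρ.act c (T.ρ.act (c⁻¹ * (k : ↥N) * c) (F0 q1)) := T.ρ.mul_act _ _ _
    _ = T.ρ.act c (F0 q1) := by rw [hfixk']

end Induce

def subIncl {G : Type} [Group G] (N H : Subgroup G) : ↥(H.subgroupOf N) →* ↥H where
  toFun := fun x => ⟨((x : ↥N) : G), x.2⟩
  map_one' := rfl
  map_mul' := fun a b => rfl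

lemma subIncl_continuous {G : Type} [Group G] [TopologicalSpace G] (N H : Subgroup G) :
    Continuous (subIncl N H) :=
  Continuous.subtype_mk (continuous_subtype_val.comp continuous_subtype_val) _

/-- If a locally compact group `G` is the union of a directed family of open subgroups, each
belonging to the class `𝒳`, then `G` belongs to `𝒳`. -/
theorem memClassX_of_directed_union_of_open
    {G : Type} [Group G] [TopologicalSpace G] [IsTopologicalGroup G] [LocallyCompactSpace G]
    {ι : Type} (Gi : ι → Subgroup G)
    (hdir : Directed (· ≤ ·) Gi)
    (hopen : ∀ i, IsOpen (Gi i : Set G))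
    (hunion : ∀ g : G, ∃ i, g ∈ Gi i)
    (hX : ∀ i, MemClassX (Gi i)) : MemClassX G := by
  intro H hHclosed hHrel S
  obtain ⟨i0, -⟩ := hunion 1
  haveI : Nonempty ι := ⟨i0⟩
  set F : ι → Set S.E := fun i =>
    S.K ∩ ⋂ (h : ↥H) (_ : (h : G) ∈ Gi i), {x | S.ρ.act h x = x} with hF
  have hKclosed : IsClosed S.K := S.compact.isClosed
  have hFclosed : ∀ i, IsClosed (F i) := by
    intro i
    refine hKclosed.inter (isClosed_iInter fun h => isClosed_iInter fun _ => ?_)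
    exact isClosed_eq (S.ρ.continuous.comp (continuous_const.prodMk continuous_id)) continuous_id
  have hFsub : ∀ i, F i ⊆ S.K := fun i => Set.inter_subset_left
  have hFcompact : ∀ i, IsCompact (F i) :=
    fun i => S.compact.of_isClosed_subset (hFclosed i) (hFsub i)
  have hFne : ∀ i, (F i).Nonempty := by
    intro i
    have hHiclosed : IsClosed ((H.subgroupOf (Gi i)) : Set ↥(Gi i)) := by
      rw [Subgroup.subgroupOf, Subgroup.coe_comap]
      exact hHclosed.preimage continuous_subtype_val
    have hHirel : RelativelyAmenable ↥(Gi i) (H.subgroupOf (Gi i)) :=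
      relAmen_subgroupOf (Gi i) (hopen i) H hHrel
    have hHiam := hX i (H.subgroupOf (Gi i)) hHiclosed hHirel
    obtain ⟨x, hxK, hxfix⟩ :=
      hHiam (S.pullback (subIncl (Gi i) H) (subIncl_continuous (Gi i) H))
    refine ⟨x, hxK, ?_⟩
    refine Set.mem_iInter₂.mpr ?_
    intro h hh
    have h1 : S.ρ.act (subIncl (Gi i) H ⟨⟨(h : G), hh⟩, h.2⟩) x = x :=
      hxfix ⟨⟨(h : G), hh⟩, h.2⟩
    have heq : subIncl (Gi i) H ⟨⟨(h : G), hh⟩, h.2⟩ = h := Subtype.ext rfl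
    rwa [heq] at h1
  have hFdir : Directed (· ⊇ ·) F := by
    intro i j
    obtain ⟨k, hik, hjk⟩ := hdir i j
    refine ⟨k, ?_, ?_⟩ <;>
      · rintro x ⟨hxK, hxfix⟩
        refine ⟨hxK, ?_⟩
        simp only [Set.mem_iInter, Set.mem_setOf_eq] at hxfix ⊢
        intro h hh
        first
          | exact hxfix h (hik hh)
          | exact hxfix h (hjk hh)
  obtain ⟨x, hx⟩ :=
    IsCompact.nonempty_iInter_of_directed_nonempty_isCompact_isClosed F hFdir hFne
      hFcompact hFclosed
  rw [Set.mem_iInter] at hx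
  refine ⟨x, (hx i0).1, ?_⟩
  intro h
  obtain ⟨i, hi⟩ := hunion (h : G)
  have := (hx i).2
  simp only [Set.mem_iInter, Set.mem_setOf_eq] at this
  exact this h hi
end

section
/- Let G be a topological group and H, L < G subgroups such that L ⪰_G H, i.e. every convex compact G-space with an L-fixed point has an H-fixed point. Suppose H is the Chabauty limit of a net {H_i} of closed subgroups with L ⪰_G H_i for all i. Then L ⪰_G H. That is, the relation ⪰_G is closed in the second variable for the Chabauty topology. -/
open scoped Topology

/-- `L` is co-amenable to `H` relative to `G` (written `L ⪰_G H`): every convex compact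
`G`-space with an `L`-fixed point has an `H`-fixed point. -/
def RelCoamenable (G : Type*) [Group G] [TopologicalSpace G] (L H : Subgroup G) : Prop :=
  ∀ S : ConvexCompactSpaceOf G,
    (∃ x ∈ S.K, ∀ l ∈ L, S.ρ.act l x = x) → ∃ x ∈ S.K, ∀ h ∈ H, S.ρ.act h x = x

/-- The relation `⪰_G` is closed in the second variable for the Chabauty topology: if `H` is
the Chabauty limit of a net of closed subgroups `H i` with `L ⪰_G H i` for all `i`, then
`L ⪰_G H`. -/
theorem relCoamenable_of_chabauty_limit
    {G : Type} [Group G] [TopologicalSpace G]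
    (L H : Subgroup G)
    {ι : Type} (l : Filter ι) [l.NeBot] (Hi : ι → Subgroup G)
    (hclosed : ∀ i, IsClosed (Hi i : Set G))
    (hco : ∀ i, RelCoamenable G L (Hi i))
    (happrox : ∀ x ∈ H, ∃ u : ι → G, (∀ i, u i ∈ Hi i) ∧ Filter.Tendsto u l (nhds x))
    (hcluster : ∀ u : ι → G, (∀ i, u i ∈ Hi i) → ∀ x : G, MapClusterPt x l u → x ∈ H) :
    RelCoamenable G L H := by
  intro S hL
  choose f hfK hfix using fun i => hco i S hL
  have hmap : Filter.map f l ≤ Filter.principal S.K :=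
    Filter.le_principal_iff.mpr (Filter.mem_map.mpr (Filter.Eventually.of_forall hfK))
  obtain ⟨x, hxK, hx⟩ := S.compact.exists_clusterPt hmap
  refine ⟨x, hxK, fun h hh => ?_⟩
  obtain ⟨u, hu, hul⟩ := happrox h hh
  set l' := l ⊓ Filter.comap f (𝓝 x) with hl'
  have hne : l'.NeBot := by
    rw [ClusterPt, inf_comm] at hx
    rw [← Filter.push_pull f l (𝓝 x)] at hx
    exact hx.of_map
  have hfx : Filter.Tendsto f l' (𝓝 x) :=
    Filter.tendsto_comap.mono_left inf_le_right
  have hux : Filter.Tendsto u l' (𝓝 h) := hul.mono_left inf_le_left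
  have h1 : Filter.Tendsto (fun i => S.ρ.act (u i) (f i)) l' (𝓝 (S.ρ.act h x)) :=
    (S.ρ.continuous.tendsto (h, x)).comp (hux.prodMk_nhds hfx)
  have h2 : (fun i => S.ρ.act (u i) (f i)) = f := by
    funext i; exact hfix i (u i) (hu i)
  rw [h2] at h1
  exact tendsto_nhds_unique h1 hfx
end

section
/- Let G be a locally compact group acting continuously on a locally compact Hausdorff space X. Suppose there is an open subgroup O < G and a compact set K ⊆ X such that O preserves K and every element of O acts as the identity on X \ K. Then the G-action on the Stone–Čech compactification βX is continuous, and consequently the G-representation on C_b(X) by left translation is continuous for the sup-norm. -/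
open scoped Topology

/-- Pasting lemma: a map continuous on each of two closed sets covering the space is
continuous. -/
lemma continuous_of_isClosed_cover' {α β : Type*} [TopologicalSpace α] [TopologicalSpace β]
    {f : α → β} {s t : Set α} (hs : IsClosed s) (ht : IsClosed t) (hcov : s ∪ t = Set.univ)
    (hfs : ContinuousOn f s) (hft : ContinuousOn f t) : Continuous f := by
  rw [continuous_iff_isClosed]
  intro c hc
  have h : f ⁻¹' c = s ∩ f ⁻¹' c ∪ t ∩ f ⁻¹' c := by
    rw [← Set.union_inter_distrib_right, hcov, Set.univ_inter]
  rw [h]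
  exact (hfs.preimage_isClosed_of_isClosed hs hc).union (hft.preimage_isClosed_of_isClosed ht hc)

/-- `Sum.elim` of two proper maps is proper. -/
lemma isProperMap_sumElim' {α β γ : Type*} [TopologicalSpace α] [TopologicalSpace β]
    [TopologicalSpace γ] {f : α → γ} {g : β → γ} (hf : IsProperMap f) (hg : IsProperMap g) :
    IsProperMap (Sum.elim f g) := by
  rw [isProperMap_iff_isClosedMap_and_compact_fibers]
  refine ⟨hf.continuous.sumElim hg.continuous, ?_, ?_⟩
  · rw [isClosedMap_sum]
    exact ⟨hf.isClosedMap, hg.isClosedMap⟩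
  · intro y
    have h : Sum.elim f g ⁻¹' {y} = Sum.inl '' (f ⁻¹' {y}) ∪ Sum.inr '' (g ⁻¹' {y}) := by
      ext (a | b) <;> simp
    rw [h]
    exact ((hf.isCompact_preimage isCompact_singleton).image continuous_inl).union
      ((hg.isCompact_preimage isCompact_singleton).image continuous_inr)

/-- The extension to the Stone–Čech compactification of the action map `act g : X → X`. -/
noncomputable def betaAct {G X : Type} [TopologicalSpace X]
    (act : G → X → X) (hc : ∀ g : G, Continuous (act g)) (g : G) :
    StoneCech X → StoneCech X :=
  stoneCechExtend (continuous_stoneCechUnit.comp (hc g))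

/-- Suppose a locally compact group `G` acts continuously on a locally compact Hausdorff
space `X`, and there are an open subgroup `O < G` and a compact set `K ⊆ X` such that `O`
preserves `K` and every element of `O` acts as the identity on `X \ K`.  Then the `G`-action
on the Stone–Čech compactification `βX` is continuous and, consequently, the `G`-representation
on `C_b(X)` by left translation is continuous for the sup-norm. -/
theorem continuous_betaAct_and_rep_of_open_subgroup
    {G X : Type} [Group G] [TopologicalSpace G] [IsTopologicalGroup G] [LocallyCompactSpace G]
    [TopologicalSpace X] [LocallyCompactSpace X] [T2Space X]
    (act : G → X → X)
    (hone : ∀ x, act 1 x = x)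
    (hmul : ∀ g h x, act (g * h) x = act g (act h x))
    (hjoint : Continuous fun p : G × X => act p.1 p.2)
    (hc : ∀ g : G, Continuous (act g))
    (O : Subgroup G) (hOopen : IsOpen (O : Set G))
    (K : Set X) (hK : IsCompact K)
    (hpres : ∀ o ∈ O, ∀ x ∈ K, act o x ∈ K)
    (htriv : ∀ o ∈ O, ∀ x ∉ K, act o x = x) :
    (Continuous fun p : G × StoneCech X => betaAct act hc p.1 p.2) ∧
    (Continuous fun p : G × BoundedContinuousFunction X ℝ =>
      p.2.compContinuous ⟨act p.1⁻¹, hc p.1⁻¹⟩) := by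
  have hO1 : (1 : G) ∈ O := O.one_mem
  constructor
  · -- continuity of the action on the Stone–Čech compactification
    set F : G × StoneCech X → StoneCech X := fun p => betaAct act hc p.1 p.2 with hF
    have hβunit : ∀ g x, betaAct act hc g (stoneCechUnit x) = stoneCechUnit (act g x) :=
      fun g x => congrFun (stoneCechExtend_extends (continuous_stoneCechUnit.comp (hc g))) x
    have hβcont : ∀ g, Continuous (betaAct act hc g) :=
      fun g => continuous_stoneCechExtend _
    have hβmul : ∀ g h z, betaAct act hc g (betaAct act hc h z) = betaAct act hc (g * h) z := by
      intro g h
      have := stoneCech_hom_ext ((hβcont g).comp (hβcont h)) (hβcont (g * h)) (by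
        funext x
        simp only [Function.comp_apply, hβunit, hmul])
      exact fun z => congrFun this z
    -- the two closed pieces of βX
    set C : Set (StoneCech X) := stoneCechUnit '' K with hCdef
    have hCcl : IsClosed C := (hK.image continuous_stoneCechUnit).isClosed
    set D : Set (StoneCech X) := closure (stoneCechUnit '' Kᶜ) with hDdef
    have hDcl : IsClosed D := isClosed_closure
    have hcov : C ∪ D = Set.univ := by
      have h1 : closure (Set.range (stoneCechUnit : X → StoneCech X)) = Set.univ :=
        denseRange_stoneCechUnit.closure_range
      have h2 : Set.range (stoneCechUnit : X → StoneCech X) =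
          stoneCechUnit '' K ∪ stoneCechUnit '' Kᶜ := by
        rw [← Set.image_union, Set.union_compl_self, Set.image_univ]
      calc C ∪ D = closure (stoneCechUnit '' K) ∪ closure (stoneCechUnit '' Kᶜ) := by
            rw [hCcl.closure_eq]
        _ = closure (stoneCechUnit '' K ∪ stoneCechUnit '' Kᶜ) := closure_union.symm
        _ = Set.univ := by rw [← h2, h1]
    have htrivD : ∀ o ∈ O, ∀ z ∈ D, betaAct act hc o z = z := by
      intro o ho z hz
      have heq : Set.EqOn (betaAct act hc o) id (stoneCechUnit '' Kᶜ) := by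
        rintro _ ⟨x, hx, rfl⟩
        simp [hβunit, htriv o ho x hx]
      exact heq.closure (hβcont o) continuous_id hz
    -- continuity on ↥O × βX via a proper quotient map
    haveI : CompactSpace ↥K := isCompact_iff_compactSpace.mp hK
    set Hsub : ↥(O : Set G) × StoneCech X → StoneCech X :=
      fun p => betaAct act hc p.1.1 p.2 with hHsubdef
    have hHsub : Continuous Hsub := by
      set P : (↥(O : Set G) × ↥K) ⊕ (↥(O : Set G) × ↥D) → ↥(O : Set G) × StoneCech X :=
        Sum.elim (Prod.map id fun x : ↥K => stoneCechUnit x.1)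
          (Prod.map id fun d : ↥D => d.1) with hPdef
      have hPK : IsProperMap fun x : ↥K => stoneCechUnit x.1 :=
        (continuous_stoneCechUnit.comp continuous_subtype_val).isProperMap
      have hPD : IsProperMap fun d : ↥D => d.1 := hDcl.isProperMap_subtypeVal
      have hPpr : IsProperMap P :=
        isProperMap_sumElim' (isProperMap_id.prodMap hPK) (isProperMap_id.prodMap hPD)
      have hPsurj : Function.Surjective P := by
        rintro ⟨o, z⟩
        have hz : z ∈ C ∪ D := hcov ▸ Set.mem_univ z
        rcases hz with hz | hz
        · obtain ⟨x, hx, rfl⟩ := hz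
          exact ⟨Sum.inl (o, ⟨x, hx⟩), rfl⟩
        · exact ⟨Sum.inr (o, ⟨z, hz⟩), rfl⟩
      have hQ : Topology.IsQuotientMap P := hPpr.isClosedMap.isQuotientMap hPpr.continuous hPsurj
      rw [hQ.continuous_iff]
      have hcomp : Hsub ∘ P = Sum.elim
          (fun p : ↥(O : Set G) × ↥K => stoneCechUnit (act p.1.1 p.2.1))
          (fun p : ↥(O : Set G) × ↥D => p.2.1) := by
        funext w
        rcases w with ⟨o, x⟩ | ⟨o, d⟩
        · simp only [hPdef, Function.comp_apply, Sum.elim_inl, Prod.map_apply, id_eq,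
            hHsubdef, hβunit]
        · simp only [hPdef, Function.comp_apply, Sum.elim_inr, Prod.map_apply, id_eq, hHsubdef]
          exact htrivD o.1 o.2 d.1 d.2
      rw [hcomp]
      refine Continuous.sumElim ?_ ?_
      · exact continuous_stoneCechUnit.comp (hjoint.comp
          ((continuous_subtype_val.comp continuous_fst).prodMk
            (continuous_subtype_val.comp continuous_snd)))
      · exact continuous_subtype_val.comp continuous_snd
    -- continuity on the open set O × βX
    have hOn : ContinuousOn F ((O : Set G) ×ˢ Set.univ) := by
      rw [continuousOn_iff_continuous_restrict]
      have heq : Set.domRestrict ((O : Set G) ×ˢ Set.univ) F =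
          Hsub ∘ fun q : ↥((O : Set G) ×ˢ (Set.univ : Set (StoneCech X))) =>
            ((⟨q.1.1, q.2.1⟩ : ↥(O : Set G)), q.1.2) := rfl
      rw [heq]
      exact hHsub.comp (((continuous_fst.comp continuous_subtype_val).subtype_mk _).prodMk
        (continuous_snd.comp continuous_subtype_val))
    have hcontAt1 : ∀ z, ContinuousAt F ((1 : G), z) := fun z =>
      hOn.continuousAt ((hOopen.prod isOpen_univ).mem_nhds (by simp [hO1]))
    rw [continuous_iff_continuousAt]
    rintro ⟨g₀, z₀⟩
    have hF' : F = betaAct act hc g₀ ∘ F ∘ fun p : G × StoneCech X => (g₀⁻¹ * p.1, p.2) := by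
      funext p
      simp only [Function.comp_apply, hF]
      rw [hβmul, mul_inv_cancel_left]
    rw [hF']
    have hτ : ContinuousAt (fun p : G × StoneCech X => (g₀⁻¹ * p.1, p.2)) (g₀, z₀) :=
      ((continuous_const.mul continuous_fst).prodMk continuous_snd).continuousAt
    have h2 : ContinuousAt (F ∘ fun p : G × StoneCech X => (g₀⁻¹ * p.1, p.2)) (g₀, z₀) := by
      refine ContinuousAt.comp ?_ hτ
      simpa using hcontAt1 z₀
    exact ((hβcont g₀).continuousAt).comp h2
  · -- continuity of the representation on C_b(X)
    rw [continuous_iff_continuousAt]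
    rintro ⟨g₀, f₀⟩
    rw [ContinuousAt, Metric.tendsto_nhds]
    intro ε hε
    have hε3 : (0 : ℝ) < ε / 3 := by positivity
    have key : ∀ᶠ g in 𝓝 g₀, ∀ x : X, dist (f₀ (act g⁻¹ x)) (f₀ (act g₀⁻¹ x)) ≤ ε / 3 := by
      have tube : ∀ᶠ o in 𝓝 (1 : G), ∀ y ∈ K, dist (f₀ (act o y)) (f₀ y) < ε / 3 := by
        apply hK.eventually_forall_of_forall_eventually
        intro y _
        have hcont : Continuous fun p : G × X => dist (f₀ (act p.1 p.2)) (f₀ p.2) :=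
          (f₀.continuous.comp hjoint).dist (f₀.continuous.comp continuous_snd)
        have hval : dist (f₀ (act (1 : G) y)) (f₀ y) < ε / 3 := by
          simp only [hone, dist_self]; exact hε3
        exact (hcont.tendsto ((1 : G), y)).eventually (gt_mem_nhds hval)
      have hmemO : ∀ᶠ o in 𝓝 (1 : G), o ∈ (O : Set G) := hOopen.mem_nhds hO1
      have comb : ∀ᶠ o in 𝓝 (1 : G), ∀ y : X, dist (f₀ (act o y)) (f₀ y) ≤ ε / 3 := by
        filter_upwards [tube, hmemO] with o h1 h2 y
        by_cases hy : y ∈ K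
        · exact (h1 y hy).le
        · rw [htriv o h2 y hy, dist_self]; exact hε3.le
      have htend : Filter.Tendsto (fun g : G => g⁻¹ * g₀) (𝓝 g₀) (𝓝 (1 : G)) := by
        have hcont : Continuous fun g : G => g⁻¹ * g₀ := continuous_inv.mul continuous_const
        simpa using hcont.tendsto g₀
      filter_upwards [htend.eventually comb] with g hg x
      have hx : act g⁻¹ x = act (g⁻¹ * g₀) (act g₀⁻¹ x) := by
        rw [← hmul]; congr 1; group
      rw [hx]
      exact hg (act g₀⁻¹ x)
    have hdistf : ∀ᶠ p : G × BoundedContinuousFunction X ℝ in 𝓝 (g₀, f₀),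
        dist p.2 f₀ < ε / 3 := by
      have hcont : Continuous fun p : G × BoundedContinuousFunction X ℝ => dist p.2 f₀ :=
        continuous_snd.dist continuous_const
      exact (hcont.tendsto (g₀, f₀)).eventually (gt_mem_nhds (by simpa using hε3))
    filter_upwards [hdistf, (continuous_fst.tendsto (g₀, f₀)).eventually key] with p h1 h2
    have hb1 : dist (p.2.compContinuous ⟨act p.1⁻¹, hc p.1⁻¹⟩)
        (f₀.compContinuous ⟨act p.1⁻¹, hc p.1⁻¹⟩) ≤ dist p.2 f₀ := by
      simpa using (BoundedContinuousFunction.lipschitz_compContinuous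
        (⟨act p.1⁻¹, hc p.1⁻¹⟩ : C(X, X))).dist_le_mul p.2 f₀
    have hb2 : dist (f₀.compContinuous ⟨act p.1⁻¹, hc p.1⁻¹⟩)
        (f₀.compContinuous ⟨act g₀⁻¹, hc g₀⁻¹⟩) ≤ ε / 3 := by
      rw [BoundedContinuousFunction.dist_le hε3.le]
      intro x
      simpa using h2 x
    set A := p.2.compContinuous (⟨act p.1⁻¹, hc p.1⁻¹⟩ : C(X, X)) with hA
    set M := f₀.compContinuous (⟨act p.1⁻¹, hc p.1⁻¹⟩ : C(X, X)) with hM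
    set B := f₀.compContinuous (⟨act g₀⁻¹, hc g₀⁻¹⟩ : C(X, X)) with hB
    calc dist A B ≤ dist A M + dist M B := dist_triangle _ _ _
      _ ≤ dist p.2 f₀ + ε / 3 := add_le_add hb1 hb2
      _ < ε / 3 + ε / 3 := by linarith
      _ < ε := by linarith
end

section
/- Let G be a locally compact group with a countable basis of identity neighbourhoods, acting continuously on a σ-compact locally compact Hausdorff space X. If the G-representation on C_b(X) by left translation is continuous for the sup-norm, then there exists an open subgroup O < G and a compact set K ⊆ X such that O preserves K and acts trivially on X \ K. -/
open scoped Topology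

open Set Filter

/-- A sequence escaping every member of an open cover has closed range. -/
lemma range_isClosed_of_escaping {X : Type} [TopologicalSpace X] [T1Space X]
    (f : ℕ → X) (D : ℕ → Set X) (hD : ∀ n, IsOpen (D n)) (hcov : ∀ y : X, ∃ n, y ∈ D n)
    (hf : ∀ n m, n ≤ m → f m ∉ D n) : IsClosed (Set.range f) := by
  have hsub : closure (Set.range f) ⊆ Set.range f := by
    intro y hy
    obtain ⟨n, hn⟩ := hcov y
    have hsplit : Set.range f = (Set.range f ∩ D n) ∪ (Set.range f \ D n) :=
      (Set.inter_union_diff _ _).symm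
    rw [hsplit, closure_union] at hy
    rcases hy with hy | hy
    · have hfin : Set.range f ∩ D n ⊆ f '' Set.Iio n := by
        rintro _ ⟨⟨m, rfl⟩, hm⟩
        exact ⟨m, lt_of_not_ge fun h => hf n m h hm, rfl⟩
      have hcl : closure (Set.range f ∩ D n) ⊆ f '' Set.Iio n :=
        closure_minimal hfin ((Set.finite_Iio n).image f).isClosed
      exact Set.image_subset_range f _ (hcl hy)
    · exfalso
      have : closure (Set.range f \ D n) ⊆ (D n)ᶜ :=
        closure_minimal (fun x hx => hx.2) (hD n).isClosed_compl
      exact this hy hn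
  exact isClosed_of_closure_subset hsub

/-- Let `G` be a locally compact group with a countable basis of identity neighbourhoods,
acting continuously on a σ-compact locally compact Hausdorff space `X`.  If the
`G`-representation on `C_b(X)` by left translation is continuous for the sup-norm, then there
are an open subgroup `O < G` and a compact set `K ⊆ X` such that `O` preserves `K` and every
element of `O` acts as the identity on `X \ K`. -/
theorem exists_open_subgroup_of_continuous_rep
    {G X : Type} [Group G] [TopologicalSpace G] [IsTopologicalGroup G] [LocallyCompactSpace G]
    [FirstCountableTopology G]
    [TopologicalSpace X] [LocallyCompactSpace X] [T2Space X] [SigmaCompactSpace X]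
    (act : G → X → X)
    (hone : ∀ x, act 1 x = x)
    (hmul : ∀ g h x, act (g * h) x = act g (act h x))
    (hjoint : Continuous fun p : G × X => act p.1 p.2)
    (hc : ∀ g : G, Continuous (act g))
    (hrep : Continuous fun p : G × BoundedContinuousFunction X ℝ =>
      p.2.compContinuous ⟨act p.1⁻¹, hc p.1⁻¹⟩) :
    ∃ (O : Subgroup G) (K : Set X), IsOpen (O : Set G) ∧ IsCompact K ∧
      (∀ o ∈ O, ∀ x ∈ K, act o x ∈ K) ∧ ∀ o ∈ O, ∀ x ∉ K, act o x = x := by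
  -- Key step: find a compact set `K` and a neighbourhood `U` of `1` such that every element
  -- of `U` acts trivially outside `K`.
  have key : ∃ K : Set X, IsCompact K ∧ ∃ U ∈ 𝓝 (1 : G), ∀ g ∈ U, ∀ x ∉ K, act g x = x := by
    by_contra hcon
    push_neg at hcon
    obtain ⟨u, hu⟩ := (𝓝 (1 : G)).exists_antitone_basis
    obtain ⟨V, hVc, hVn⟩ := exists_compact_mem_nhds (1 : G)
    -- The "backwards translate" of a compact set by elements of `V`.
    set T : Set X → Set X := fun C => (fun p : G × X => act p.1⁻¹ p.2) '' (V ×ˢ C) with hT_def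
    have hTcont : Continuous fun p : G × X => act p.1⁻¹ p.2 :=
      hjoint.comp ((continuous_fst.inv).prodMk continuous_snd)
    have hT : ∀ C : Set X, IsCompact C → IsCompact (T C) :=
      fun C hC => (hVc.prod hC).image hTcont
    have step : ∀ (n : ℕ) (C : Set X), IsCompact C →
        ∃ g, (g ∈ u n ∧ g ∈ V) ∧ ∃ x, x ∉ C ∪ T C ∧ act g x ≠ x := by
      intro n C hC
      obtain ⟨g, hg, x, hx, hgx⟩ := hcon (C ∪ T C) (hC.union (hT C hC)) (u n ∩ V)
        (Filter.inter_mem (hu.1.mem_of_mem trivial) hVn)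
      exact ⟨g, ⟨hg.1, hg.2⟩, x, hx, hgx⟩
    choose gS hgS xS hxS1 hxS2 using step
    set E := CompactExhaustion.choice X with hE_def
    -- Recursively construct the compact sets `C n` together with the pairs `(g n, x n)`.
    let seq : ℕ → {C : Set X // IsCompact C} := fun n =>
      Nat.rec ⟨E 0, E.isCompact 0⟩
        (fun n p =>
          ⟨p.1 ∪ T p.1 ∪ {xS n p.1 p.2, act (gS n p.1 p.2) (xS n p.1 p.2)} ∪ E (n + 1),
            ((p.2.union (hT p.1 p.2)).union
              (((Set.finite_singleton _).insert _).isCompact)).union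
              (E.isCompact (n + 1))⟩) n
    set C : ℕ → Set X := fun n => (seq n).1 with hC_def
    set gg : ℕ → G := fun n => gS n (seq n).1 (seq n).2 with hgg_def
    set xx : ℕ → X := fun n => xS n (seq n).1 (seq n).2 with hxx_def
    set yy : ℕ → X := fun n => act (gg n) (xx n) with hyy_def
    have hgu : ∀ n, gg n ∈ u n := fun n => (hgS n (seq n).1 (seq n).2).1
    have hgV : ∀ n, gg n ∈ V := fun n => (hgS n (seq n).1 (seq n).2).2
    have hxnot : ∀ n, xx n ∉ C n ∪ T (C n) := fun n => hxS1 n (seq n).1 (seq n).2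
    have hne : ∀ n, yy n ≠ xx n := fun n => hxS2 n (seq n).1 (seq n).2
    have hxC : ∀ n, xx n ∉ C n := fun n => fun h => hxnot n (Or.inl h)
    have hyC : ∀ n, yy n ∉ C n := by
      intro n h
      refine hxnot n (Or.inr ?_)
      exact ⟨(gg n, yy n), ⟨hgV n, h⟩, by
        show act (gg n)⁻¹ (act (gg n) (xx n)) = xx n
        rw [← hmul, inv_mul_cancel, hone]⟩
    have hCsucc : ∀ n, C (n + 1) = C n ∪ T (C n) ∪ {xx n, yy n} ∪ E (n + 1) := fun n => rfl
    have hmono : Monotone C := by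
      apply monotone_nat_of_le_succ
      intro n
      rw [hCsucc n]
      exact fun x hx => Or.inl (Or.inl (Or.inl hx))
    have hEC : ∀ n, E n ⊆ C n := by
      intro n
      cases n with
      | zero => exact subset_rfl
      | succ m => rw [hCsucc m]; exact fun x hx => Or.inr hx
    have hxmem : ∀ n, xx n ∈ C (n + 1) := by
      intro n; rw [hCsucc n]; exact Or.inl (Or.inr (Or.inl rfl))
    have hymem : ∀ n, yy n ∈ C (n + 1) := by
      intro n; rw [hCsucc n]; exact Or.inl (Or.inr (Or.inr rfl))
    -- The ranges of `xx` and `yy` are closed and disjoint.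
    have hesc : ∀ (f : ℕ → X), (∀ m, f m ∉ C m) → ∀ n m, n ≤ m → f m ∉ interior (E n) := by
      intro f hf n m hnm h
      exact hf m (hmono hnm (hEC n (interior_subset h)))
    have hcov : ∀ y : X, ∃ n, y ∈ interior (E n) := by
      intro y
      obtain ⟨n, hn⟩ := E.exists_mem y
      exact ⟨n + 1, E.subset_interior_succ n hn⟩
    have hAcl : IsClosed (Set.range xx) :=
      range_isClosed_of_escaping xx (fun n => interior (E n)) (fun _ => isOpen_interior)
        hcov (hesc xx hxC)
    have hBcl : IsClosed (Set.range yy) :=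
      range_isClosed_of_escaping yy (fun n => interior (E n)) (fun _ => isOpen_interior)
        hcov (hesc yy hyC)
    have hdisj : Disjoint (Set.range xx) (Set.range yy) := by
      rw [Set.disjoint_left]
      rintro _ ⟨m, rfl⟩ ⟨n, hn⟩
      rcases lt_trichotomy m n with h | h | h
      · exact hyC n (hn ▸ hmono h (hxmem m))
      · exact hne m (h ▸ hn)
      · exact hxC m (hn ▸ hmono h (hymem n))
    -- Urysohn's lemma gives a function separating the two ranges.
    obtain ⟨f, hf0, hf1, hf01⟩ := exists_continuous_zero_one_of_isClosed hAcl hBcl hdisj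
    set F : BoundedContinuousFunction X ℝ :=
      BoundedContinuousFunction.ofNormedAddCommGroup f f.continuous 1
        (fun x => by
          have h := hf01 x
          rw [Real.norm_eq_abs, abs_le]
          exact ⟨le_trans (by norm_num) h.1, h.2⟩) with hF_def
    have hFcoe : ∀ x, F x = f x := fun x => rfl
    -- Continuity of the representation at `(1, F)` gives the contradiction.
    have hΦ : Continuous fun g : G => F.compContinuous ⟨act g⁻¹, hc g⁻¹⟩ :=
      hrep.comp (continuous_id.prodMk continuous_const)
    have htg : Filter.Tendsto gg Filter.atTop (𝓝 (1 : G)) := hu.tendsto hgu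
    have h2 : Filter.Tendsto (fun n => F.compContinuous ⟨act (gg n)⁻¹, hc (gg n)⁻¹⟩)
        Filter.atTop (𝓝 (F.compContinuous ⟨act (1 : G)⁻¹, hc (1 : G)⁻¹⟩)) :=
      (hΦ.tendsto 1).comp htg
    have hΦ1 : F.compContinuous ⟨act (1 : G)⁻¹, hc (1 : G)⁻¹⟩ = F := by
      ext y
      simp only [BoundedContinuousFunction.compContinuous_apply, ContinuousMap.coe_mk,
        inv_one, hone]
    rw [hΦ1] at h2
    have h3 := (Metric.tendsto_atTop.mp h2) 1 one_pos
    obtain ⟨n, hn⟩ := h3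
    have hn' := hn n le_rfl
    have hle : dist ((F.compContinuous ⟨act (gg n)⁻¹, hc (gg n)⁻¹⟩) (yy n)) (F (yy n)) ≤
        dist (F.compContinuous ⟨act (gg n)⁻¹, hc (gg n)⁻¹⟩) F :=
      BoundedContinuousFunction.dist_coe_le_dist (yy n)
    have hval : (F.compContinuous ⟨act (gg n)⁻¹, hc (gg n)⁻¹⟩) (yy n) = F (xx n) := by
      rw [BoundedContinuousFunction.compContinuous_apply]
      show F (act (gg n)⁻¹ (act (gg n) (xx n))) = F (xx n)
      rw [← hmul, inv_mul_cancel, hone]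
    have hFx : F (xx n) = 0 := by
      rw [hFcoe]; exact hf0 ⟨n, rfl⟩
    have hFy : F (yy n) = 1 := by
      rw [hFcoe]; exact hf1 ⟨n, rfl⟩
    rw [hval, hFx, hFy] at hle
    simp only [Real.dist_eq] at hle
    norm_num at hle
    exact absurd (lt_of_le_of_lt hle hn') (lt_irrefl 1)
  -- Build the open subgroup from the key step.
  obtain ⟨K, hKc, U, hU, hUK⟩ := key
  refine ⟨{ carrier := {g : G | ∀ x ∉ K, act g x = x}
            one_mem' := fun x _ => hone x
            mul_mem' := by
              intro a b ha hb x hx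
              rw [hmul, hb x hx, ha x hx]
            inv_mem' := by
              intro a ha x hx
              calc act a⁻¹ x = act a⁻¹ (act a x) := by rw [ha x hx]
                _ = x := by rw [← hmul, inv_mul_cancel, hone] }, K, ?_, hKc, ?_, ?_⟩
  · apply Subgroup.isOpen_of_mem_nhds
    exact Filter.mem_of_superset hU (fun g hg => hUK g hg)
  · intro o ho x hx
    by_contra hox
    have h1 : act o⁻¹ (act o x) = act o x := by
      exact (Subgroup.inv_mem _ ho : ∀ y ∉ K, act o⁻¹ y = y) (act o x) hox
    have h2 : act o⁻¹ (act o x) = x := by rw [← hmul, inv_mul_cancel, hone]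
    rw [h1] at h2
    exact hox (h2.symm ▸ hx)
  · intro o ho x hx
    exact ho x hx
end
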